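/- Let s ≥ 3 be an integer and suppose H is a K_s-free simple graph on h vertices with H → (s−1, s−1)^v and χ(H) = 2s−3. Then there exists a K_{s+1}-free simple graph G on exactly 1 + s + s·h vertices with G → (s, s)^v and χ(G) = 2s−1. (Hence F^χ(2, s, s+1) ≤ 1 + s + s·F^χ(2, s−1, s).) -/

import Mathlib

/-- `G → (a₁,…,a_r)ᵛ`: for every coloring of the vertices of `G` with `r` colors,
there is a color `i` and a clique of `G` on `a i` vertices all of whose vertices
receive color `i`. -/
def VArrows {V : Type*} {r : ℕ} (G : SimpleGraph V) (a : Fin r → ℕ) : Prop :=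
  ∀ c : V → Fin r, ∃ i : Fin r, ∃ t : Finset V,
    G.IsNClique (a i) t ∧ ∀ v ∈ t, c v = i

open SimpleGraph Finset

/-- Vertex type of the construction: apex ⊕ s "w"-vertices ⊕ s copies of H. -/
abbrev WT (s h : ℕ) := (Fin 1 ⊕ Fin s) ⊕ (Fin s × Fin h)

/-- The construction: apex `u` adjacent to all copies, `w i` forming a clique,
`w i` joined completely to copy `i`, copies pairwise nonadjacent. -/
def bigGraph (s : ℕ) {h : ℕ} (H : SimpleGraph (Fin h)) : SimpleGraph (WT s h) where
  Adj a b := match a, b with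
    | Sum.inl (Sum.inl _), Sum.inl (Sum.inl _) => False
    | Sum.inl (Sum.inl _), Sum.inl (Sum.inr _) => False
    | Sum.inl (Sum.inr _), Sum.inl (Sum.inl _) => False
    | Sum.inl (Sum.inr i), Sum.inl (Sum.inr k) => i ≠ k
    | Sum.inl (Sum.inl _), Sum.inr _ => True
    | Sum.inr _, Sum.inl (Sum.inl _) => True
    | Sum.inl (Sum.inr i), Sum.inr (j, _) => i = j
    | Sum.inr (j, _), Sum.inl (Sum.inr i) => i = j
    | Sum.inr (i, x), Sum.inr (j, y) => i = j ∧ H.Adj x y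
  symm := by
    constructor
    rintro ((a|i)|⟨i,x⟩) ((b|k)|⟨k,y⟩) hadj <;>
      first
        | exact hadj
        | exact hadj.symm
        | exact trivial
        | exact ⟨hadj.1.symm, hadj.2.symm⟩
  loopless := by
    constructor
    rintro ((a|i)|⟨i,x⟩) hadj
    · exact hadj
    · exact hadj rfl
    · exact H.loopless.irrefl x hadj.2

section Main

variable {s h : ℕ} {H : SimpleGraph (Fin h)}

theorem bigGraph_cliqueFree (hs : 3 ≤ s) (hHfree : H.CliqueFree s) :
    (bigGraph s H).CliqueFree (s + 1) := by
  classical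
  intro T hT
  by_cases hcopy : ∃ j x, (Sum.inr (j, x) : WT s h) ∈ T
  · obtain ⟨j, x₀, hjx⟩ := hcopy
    -- all copy vertices of T live in copy j
    have hsame : ∀ k y, (Sum.inr (k, y) : WT s h) ∈ T → k = j := by
      intro k y hky
      by_cases heq : (Sum.inr (k, y) : WT s h) = Sum.inr (j, x₀)
      · simpa using congrArg (fun a => match a with
          | Sum.inr (p : Fin s × Fin h) => p.1
          | _ => j) heq
      · exact (hT.1 hky hjx heq).1
    -- all w vertices of T have index j
    have hwj : ∀ i, (Sum.inl (Sum.inr i) : WT s h) ∈ T → i = j := by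
      intro i hi
      have hne : (Sum.inl (Sum.inr i) : WT s h) ≠ Sum.inr (j, x₀) := by simp
      exact hT.1 hi hjx hne
    -- no apex together with w
    have hnuw : ∀ z i, (Sum.inl (Sum.inl z) : WT s h) ∈ T →
        (Sum.inl (Sum.inr i) : WT s h) ∉ T := by
      intro z i hz hi
      have hne : (Sum.inl (Sum.inl z) : WT s h) ≠ Sum.inl (Sum.inr i) := by simp
      exact hT.1 hz hi hne
    set S : Finset (Fin h) := Finset.univ.filter (fun y => (Sum.inr (j, y) : WT s h) ∈ T)
      with hS
    have hSmem : ∀ y, y ∈ S ↔ (Sum.inr (j, y) : WT s h) ∈ T := by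
      intro y; simp [hS]
    have hSclique : H.IsClique (↑S) := by
      intro a ha b hb hab
      have ha' := (hSmem a).mp (Finset.mem_coe.mp ha)
      have hb' := (hSmem b).mp (Finset.mem_coe.mp hb)
      have hne : (Sum.inr (j, a) : WT s h) ≠ Sum.inr (j, b) := by simp [hab]
      exact (hT.1 ha' hb' hne).2
    have hScard : S.card ≤ s - 1 := by
      by_contra hbig
      push_neg at hbig
      obtain ⟨S', hsub, hcard⟩ := S.exists_subset_card_eq (n := s) (by omega)
      exact hHfree S' ⟨hSclique.subset (Finset.coe_subset.mpr hsub), hcard⟩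
    -- counting
    set f : WT s h → Option (Fin h) := fun a => match a with
      | Sum.inr (_, y) => some y
      | _ => none
      with hf
    have hinj : Set.InjOn f (↑T) := by
      rintro ((a|i)|⟨i,x⟩) ha ((b|k)|⟨k,y⟩) hb hfe <;>
        simp only [hf] at hfe
      · exact congrArg (fun z => Sum.inl (Sum.inl z)) (Subsingleton.elim a b)
      · exact absurd (Finset.mem_coe.mp hb) (hnuw a k (Finset.mem_coe.mp ha))
      · exact absurd hfe (by simp)
      · exact absurd (Finset.mem_coe.mp ha) (hnuw b i (Finset.mem_coe.mp hb))
      · rw [hwj i (Finset.mem_coe.mp ha), hwj k (Finset.mem_coe.mp hb)]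
      · exact absurd hfe (by simp)
      · exact absurd hfe (by simp)
      · exact absurd hfe (by simp)
      · have : x = y := by simpa using hfe
        rw [hsame i x (Finset.mem_coe.mp ha), hsame k y (Finset.mem_coe.mp hb), this]
    have hsub : T.image f ⊆ insert none (S.image some) := by
      intro o ho
      obtain ⟨a, haT, hfa⟩ := Finset.mem_image.mp ho
      rcases a with ((z|i)|⟨k,y⟩)
      · simp [hf] at hfa; simp [← hfa]
      · simp [hf] at hfa; simp [← hfa]
      · have hkj := hsame k y haT
        subst hkj
        have : y ∈ S := (hSmem y).mpr haT
        simp only [hf] at hfa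
        rw [← hfa]
        exact Finset.mem_insert_of_mem (Finset.mem_image_of_mem some this)
    have hc1 : T.card = (T.image f).card := (Finset.card_image_of_injOn hinj).symm
    have hc2 : (T.image f).card ≤ (S.image some).card + 1 :=
      le_trans (Finset.card_le_card hsub) (Finset.card_insert_le _ _)
    have hc3 : (S.image some).card = S.card :=
      Finset.card_image_of_injective _ (Option.some_injective _)
    have := hT.2
    omega
  · push_neg at hcopy
    by_cases hu : ∃ z, (Sum.inl (Sum.inl z) : WT s h) ∈ T
    · obtain ⟨z, hz⟩ := hu
      have hnow : ∀ i, (Sum.inl (Sum.inr i) : WT s h) ∉ T := by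
        intro i hi
        have hne : (Sum.inl (Sum.inr i) : WT s h) ≠ Sum.inl (Sum.inl z) := by simp
        exact hT.1 hi hz hne
      have hsub : T ⊆ {Sum.inl (Sum.inl z)} := by
        rintro ((z'|i)|⟨k,y⟩) ha
        · simp [Subsingleton.elim z' z]
        · exact absurd ha (hnow i)
        · exact absurd ha (hcopy k y)
      have := Finset.card_le_card hsub
      simp only [Finset.card_singleton] at this
      have := hT.2
      omega
    · push_neg at hu
      have hsub : T ⊆ Finset.univ.image (fun i : Fin s => (Sum.inl (Sum.inr i) : WT s h)) := by
        rintro ((z|i)|⟨k,y⟩) ha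
        · exact absurd ha (hu z)
        · exact Finset.mem_image_of_mem _ (Finset.mem_univ i)
        · exact absurd ha (hcopy k y)
      have h1 := Finset.card_le_card hsub
      have h2 := Finset.card_image_le (f := fun i : Fin s => (Sum.inl (Sum.inr i) : WT s h))
        (s := Finset.univ)
      simp only [Finset.card_univ, Fintype.card_fin] at h2
      have := hT.2
      omega

theorem bigGraph_varrows (hs : 3 ≤ s) (hHarr : VArrows H ![s - 1, s - 1]) :
    VArrows (bigGraph s H) ![s, s] := by
  classical
  intro c
  have hvec : ∀ i : Fin 2, ![s, s] i = s := by
    intro i; fin_cases i <;> rfl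
  have hvec' : ∀ i : Fin 2, ![s - 1, s - 1] i = s - 1 := by
    intro i; fin_cases i <;> rfl
  set u : WT s h := Sum.inl (Sum.inl ⟨0, Nat.one_pos⟩) with hu
  have copies : ∀ j : Fin s, ∃ i : Fin 2, ∃ t : Finset (Fin h),
      H.IsNClique (s - 1) t ∧ ∀ x ∈ t, c (Sum.inr (j, x)) = i := by
    intro j
    obtain ⟨i, t, h1, h2⟩ := hHarr (fun x => c (Sum.inr (j, x)))
    exact ⟨i, t, by rwa [hvec'] at h1, h2⟩
  choose ic tc hcl hmono using copies
  have hinj : ∀ j : Fin s, Function.Injective (fun x : Fin h => (Sum.inr (j, x) : WT s h)) := by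
    intro j a b hab; simpa using hab
  -- generic: a vertex v adjacent to everything in copy j and colored ic j gives a clique
  have build : ∀ (j : Fin s) (v : WT s h),
      (∀ x, (bigGraph s H).Adj v (Sum.inr (j, x))) → (∀ x, v ≠ Sum.inr (j, x)) →
      c v = ic j →
      ∃ t : Finset (WT s h), (bigGraph s H).IsNClique s t ∧ ∀ w ∈ t, c w = ic j := by
    intro j v hadj hne hcv
    refine ⟨insert v ((tc j).image (fun x => Sum.inr (j, x))), ⟨?_, ?_⟩, ?_⟩
    · intro a ha b hb hab
      rcases Finset.mem_insert.mp (Finset.mem_coe.mp ha) with rfl | hai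
      · rcases Finset.mem_insert.mp (Finset.mem_coe.mp hb) with rfl | hbi
        · exact absurd rfl hab
        · obtain ⟨x, _, rfl⟩ := Finset.mem_image.mp hbi
          exact hadj x
      · obtain ⟨x, hx, rfl⟩ := Finset.mem_image.mp hai
        rcases Finset.mem_insert.mp (Finset.mem_coe.mp hb) with rfl | hbi
        · exact ((bigGraph s H).adj_symm (hadj x))
        · obtain ⟨y, hy, rfl⟩ := Finset.mem_image.mp hbi
          have hxy : x ≠ y := fun hh => hab (by rw [hh])
          exact ⟨rfl, (hcl j).1 (Finset.mem_coe.mpr hx) (Finset.mem_coe.mpr hy) hxy⟩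
    · rw [Finset.card_insert_of_notMem, Finset.card_image_of_injective _ (hinj j), (hcl j).2]
      · omega
      · intro hmem
        obtain ⟨x, _, hx⟩ := Finset.mem_image.mp hmem
        exact hne x hx.symm
    · intro w hw
      rcases Finset.mem_insert.mp hw with rfl | hw'
      · exact hcv
      · obtain ⟨x, hx, rfl⟩ := Finset.mem_image.mp hw'
        exact hmono j x hx
  by_cases hca : ∃ j, ic j = c u
  · obtain ⟨j, hj⟩ := hca
    obtain ⟨t, ht, hm⟩ := build j u (fun x => trivial) (fun x => by simp [hu]) hj.symm
    refine ⟨ic j, t, ?_, hm⟩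
    rwa [hvec]
  · push_neg at hca
    have key2 : ∀ cu z : Fin 2, z ≠ cu → ∀ z' : Fin 2, z' ≠ cu → z = z' := by decide
    by_cases hcb : ∃ j : Fin s, c (Sum.inl (Sum.inr j)) ≠ c u
    · obtain ⟨j, hj⟩ := hcb
      have hcw : c (Sum.inl (Sum.inr j)) = ic j := key2 (c u) _ hj _ (hca j)
      obtain ⟨t, ht, hm⟩ := build j (Sum.inl (Sum.inr j))
        (fun x => rfl) (fun x => by simp) hcw
      refine ⟨ic j, t, ?_, hm⟩
      rwa [hvec]
    · push_neg at hcb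
      refine ⟨c u, Finset.univ.image (fun i : Fin s => (Sum.inl (Sum.inr i) : WT s h)),
        ⟨?_, ?_⟩, ?_⟩
      · intro a ha b hb hab
        obtain ⟨i, _, rfl⟩ := Finset.mem_image.mp (Finset.mem_coe.mp ha)
        obtain ⟨k, _, rfl⟩ := Finset.mem_image.mp (Finset.mem_coe.mp hb)
        exact fun hik => hab (by rw [hik])
      · rw [hvec, Finset.card_image_of_injective, Finset.card_univ, Fintype.card_fin]
        intro a b hab; simpa using hab
      · intro w hw
        obtain ⟨i, _, rfl⟩ := Finset.mem_image.mp hw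
        exact hcb i

theorem bigGraph_colorable (hs : 3 ≤ s) (hHcol : H.Colorable (2 * s - 3)) :
    (bigGraph s H).Colorable (2 * s - 1) := by
  obtain ⟨c₀⟩ := hHcol
  refine ⟨SimpleGraph.Coloring.mk (fun a => match a with
    | Sum.inl (Sum.inl _) => ⟨2 * s - 2, by omega⟩
    | Sum.inl (Sum.inr i) => ⟨i.val, by have := i.isLt; omega⟩
    | Sum.inr (i, x) =>
        if (c₀ x).val < i.val then ⟨(c₀ x).val, by have := (c₀ x).isLt; omega⟩
        else ⟨(c₀ x).val + 1, by have := (c₀ x).isLt; omega⟩) ?_⟩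
  rintro ((a|i)|⟨i,x⟩) ((b|k)|⟨k,y⟩) hadj
  -- (u,u)
  · exact False.elim hadj
  -- (u,w)
  · exact False.elim hadj
  -- (u,copy)
  · apply Fin.ne_of_val_ne
    have := (c₀ y).isLt
    have hk := k.isLt
    simp only
    split <;> simp <;> omega
  -- (w,u)
  · exact False.elim hadj
  -- (w,w)
  · apply Fin.ne_of_val_ne
    have hik : i ≠ k := hadj
    simp only
    exact fun hh => hik (Fin.ext hh)
  -- (w,copy)
  · apply Fin.ne_of_val_ne
    have := (c₀ y).isLt
    have hik : i = k := hadj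
    have hkv := k.isLt
    simp only
    split <;> simp [hik] <;> omega
  -- (copy,u)
  · apply Fin.ne_of_val_ne
    have := (c₀ x).isLt
    simp only
    split <;> simp <;> omega
  -- (copy,w)
  · apply Fin.ne_of_val_ne
    have := (c₀ x).isLt
    have hik : k = i := hadj
    have hiv := i.isLt
    simp only
    split <;> simp [hik] <;> omega
  -- (copy,copy)
  · obtain ⟨rfl, hxy⟩ := hadj
    have hne : (c₀ x).val ≠ (c₀ y).val := Fin.val_ne_of_ne (c₀.valid hxy)
    apply Fin.ne_of_val_ne
    simp only
    split <;> split <;> simp <;> omega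

theorem bigGraph_not_colorable (hs : 3 ≤ s)
    (hHchi : H.chromaticNumber = ((2 * s - 3 : ℕ) : ℕ∞)) :
    ¬ (bigGraph s H).Colorable (2 * s - 2) := by
  classical
  rintro ⟨C⟩
  have hHn : ¬ H.Colorable (2 * s - 4) := by
    intro hc
    have h1 := hc.chromaticNumber_le
    rw [hHchi, Nat.cast_le] at h1
    omega
  set u : WT s h := Sum.inl (Sum.inl ⟨0, Nat.one_pos⟩) with hu
  have key : ∀ i : Fin s, C (Sum.inl (Sum.inr i)) = C u := by
    intro i
    by_contra hne
    have hadj_u : ∀ x : Fin h, C (Sum.inr (i, x)) ≠ C u :=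
      fun x => C.valid (by exact trivial)
    have hadj_w : ∀ x : Fin h, C (Sum.inr (i, x)) ≠ C (Sum.inl (Sum.inr i)) :=
      fun x => C.valid (by exact rfl)
    let D : H.Coloring {v : Fin (2 * s - 2) // v ≠ C u ∧ v ≠ C (Sum.inl (Sum.inr i))} :=
      SimpleGraph.Coloring.mk
        (fun x => ⟨C (Sum.inr (i, x)), hadj_u x, hadj_w x⟩)
        (fun {a b} hab h' => by
          have hadj' : (bigGraph s H).Adj (Sum.inr (i, a)) (Sum.inr (i, b)) := ⟨rfl, hab⟩
          exact C.valid hadj' (congrArg Subtype.val h'))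
    have hcard : Fintype.card {v : Fin (2 * s - 2) // v ≠ C u ∧ v ≠ C (Sum.inl (Sum.inr i))}
        = 2 * s - 4 := by
      rw [Fintype.card_subtype]
      have hset : Finset.univ.filter
          (fun v : Fin (2 * s - 2) => v ≠ C u ∧ v ≠ C (Sum.inl (Sum.inr i)))
          = Finset.univ \ {C u, C (Sum.inl (Sum.inr i))} := by
        ext v; simp [not_or]
      rw [hset, Finset.card_sdiff_of_subset (Finset.subset_univ _), Finset.card_univ, Fintype.card_fin,
        Finset.card_pair (fun hh => hne hh.symm)]
      omega
    exact hHn (by rw [← hcard]; exact D.colorable)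
  have h0s : (0 : ℕ) < s := by omega
  have h1s : (1 : ℕ) < s := by omega
  have hne01 : (⟨0, h0s⟩ : Fin s) ≠ ⟨1, h1s⟩ := by
    intro hh; simpa using congrArg Fin.val hh
  have h01 : C (Sum.inl (Sum.inr ⟨0, h0s⟩)) ≠ C (Sum.inl (Sum.inr ⟨1, h1s⟩)) :=
    C.valid hne01
  rw [key, key] at h01
  exact h01 rfl

end Main

/-- If `H` is a `K_s`-free graph on `h` vertices with `H → (s-1, s-1)ᵛ` and
`χ(H) = 2s - 3`, then there is a `K_{s+1}`-free graph `G` on `1 + s + s·h` vertices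
with `G → (s, s)ᵛ` and `χ(G) = 2s - 1`.
(Hence `F^χ(2, s, s+1) ≤ 1 + s + s·F^χ(2, s-1, s)`.) -/
theorem stmt_3 (s h : ℕ) (hs : 3 ≤ s) (H : SimpleGraph (Fin h))
    (hHfree : H.CliqueFree s)
    (hHarr : VArrows H ![s - 1, s - 1])
    (hHchi : H.chromaticNumber = ((2 * s - 3 : ℕ) : ℕ∞)) :
    ∃ G : SimpleGraph (Fin (1 + s + s * h)),
      G.CliqueFree (s + 1) ∧ VArrows G ![s, s] ∧
      G.chromaticNumber = ((2 * s - 1 : ℕ) : ℕ∞) := by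
  classical
  have hHcol : H.Colorable (2 * s - 3) :=
    SimpleGraph.chromaticNumber_le_iff_colorable.mp (le_of_eq hHchi)
  let e : Fin (1 + s + s * h) ≃ WT s h :=
    finSumFinEquiv.symm.trans (Equiv.sumCongr finSumFinEquiv.symm finProdFinEquiv.symm)
  let iso := SimpleGraph.Iso.comap e (bigGraph s H)
  refine ⟨(bigGraph s H).comap e.toEmbedding, ?_, ?_, ?_⟩
  · exact (bigGraph_cliqueFree hs hHfree).comap iso.toEmbedding.isContained
  · -- transfer VArrows along the iso
    intro c
    obtain ⟨i, t, ht, hm⟩ := bigGraph_varrows hs hHarr (c ∘ iso.symm)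
    refine ⟨i, t.image iso.symm, ⟨?_, ?_⟩, ?_⟩
    · intro a ha b hb hab
      obtain ⟨x, hx, rfl⟩ := Finset.mem_image.mp (Finset.mem_coe.mp ha)
      obtain ⟨y, hy, rfl⟩ := Finset.mem_image.mp (Finset.mem_coe.mp hb)
      have hxy : x ≠ y := fun hh => hab (by rw [hh])
      exact iso.symm.map_adj_iff.mpr (ht.1 (Finset.mem_coe.mpr hx) (Finset.mem_coe.mpr hy) hxy)
    · rw [Finset.card_image_of_injective _ iso.symm.injective]
      exact ht.2
    · intro v hv
      obtain ⟨x, hx, rfl⟩ := Finset.mem_image.mp hv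
      exact hm x hx
  · -- chromatic number
    have hcol : ((bigGraph s H).comap e.toEmbedding).Colorable (2 * s - 1) :=
      Colorable.of_hom iso.toEmbedding.toHom (bigGraph_colorable hs hHcol)
    have hncol : ¬ ((bigGraph s H).comap e.toEmbedding).Colorable (2 * s - 2) := by
      intro hc
      exact bigGraph_not_colorable hs hHchi (Colorable.of_hom iso.symm.toEmbedding.toHom hc)
    have hle := hcol.chromaticNumber_le
    have hne : ((bigGraph s H).comap e.toEmbedding).chromaticNumber ≠ ⊤ :=
      ne_top_of_le_ne_top (ENat.coe_ne_top _) hle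
    obtain ⟨m, hm⟩ : ∃ m : ℕ, ((bigGraph s H).comap e.toEmbedding).chromaticNumber = m := by
      refine ⟨(((bigGraph s H).comap e.toEmbedding).chromaticNumber).toNat, ?_⟩
      exact (ENat.coe_toNat hne).symm
    have hcolm : ((bigGraph s H).comap e.toEmbedding).Colorable m := by
      have := SimpleGraph.colorable_chromaticNumber hcol
      rwa [hm, ENat.toNat_coe] at this
    rw [hm] at hle ⊢
    rw [Nat.cast_le] at hle
    have hge : 2 * s - 1 ≤ m := by
      by_contra hlt
      push_neg at hlt
      exact hncol (hcolm.mono (by omega))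
    congr 1
    omega
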